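/- Let A be a finite dimensional differential graded algebra over a field k with Jacobson radical J. Then J_+ := J + d(J) is a two-sided differential graded ideal of A. -/

import Mathlib

/-!
STATEMENT 1: For a finite dimensional DGA `A` over a field `k` with Jacobson radical `J`,
the set `J₊ = J + d(J)` is a two-sided differential graded ideal of `A`.
-/

theorem external_radical_is_dg_ideal
    {k A : Type*} [Field k] [Ring A] [Algebra k A] [FiniteDimensional k A]
    -- the grading of the finite dimensional DGA
    (𝒜 : ℤ → Submodule k A) [GradedAlgebra 𝒜]
    -- the differential
    (d : A →ₗ[k] A)
    (hd2 : ∀ a : A, d (d a) = 0)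
    (hdeg : ∀ (n : ℤ), ∀ a ∈ 𝒜 n, d a ∈ 𝒜 (n + 1))
    (hleib : ∀ (n : ℤ), ∀ a ∈ 𝒜 n, ∀ b : A,
      d (a * b) = d a * b + ((-1 : k) ^ n) • (a * d b))
    -- the Jacobson radical of the underlying ungraded algebra
    (J : TwoSidedIdeal A) (hJ : J = (⊥ : TwoSidedIdeal A).jacobson)
    -- the external DG ideal J₊ = J + d(J)
    (Jp : Set A) (hJp : Jp = {x : A | ∃ a ∈ J, ∃ b ∈ J, x = a + d b}) :
    -- J₊ is a two-sided ideal closed under the differential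
    (0 : A) ∈ Jp ∧
    (∀ a ∈ Jp, ∀ b ∈ Jp, a + b ∈ Jp) ∧
    (∀ a ∈ Jp, -a ∈ Jp) ∧
    (∀ x : A, ∀ a ∈ Jp, x * a ∈ Jp) ∧
    (∀ x : A, ∀ a ∈ Jp, a * x ∈ Jp) ∧
    (∀ a ∈ Jp, d a ∈ Jp) := by
  have hne : (-1 : k) ≠ 0 := by norm_num
  -- the sign automorphism
  obtain ⟨σ, hσ⟩ : ∃ σ : A →ₗ[k] A, ∀ (m : ℤ), ∀ a ∈ 𝒜 m, σ a = ((-1:k)^m) • a := by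
    refine ⟨(DirectSum.toModule k ℤ A (fun i => ((-1:k)^i) • (𝒜 i).subtype)).comp
        (DirectSum.decomposeLinearEquiv 𝒜).toLinearMap, ?_⟩
    intro m a ha
    rw [LinearMap.comp_apply]
    rw [show (DirectSum.decomposeLinearEquiv 𝒜).toLinearMap a = DirectSum.decompose 𝒜 a from rfl]
    rw [DirectSum.decompose_of_mem 𝒜 ha, ← DirectSum.lof_eq_of k, DirectSum.toModule_lof]
    simp
  have hσ1 : σ 1 = 1 := by
    rw [hσ 0 1 SetLike.GradedOne.one_mem]; simp
  have hσmul : ∀ a b : A, σ (a * b) = σ a * σ b := by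
    intro a
    refine DirectSum.Decomposition.inductionOn 𝒜
      (motive := fun a => ∀ b : A, σ (a * b) = σ a * σ b) ?_ ?_ ?_ a
    · intro b; simp
    · intro m x
      refine DirectSum.Decomposition.inductionOn 𝒜
        (motive := fun b => σ ((x : A) * b) = σ (x : A) * σ b) ?_ ?_ ?_
      · simp
      · intro n y
        have hxy : (x : A) * (y : A) ∈ 𝒜 (m + n) := SetLike.mul_mem_graded x.2 y.2
        rw [hσ _ _ hxy, hσ _ _ x.2, hσ _ _ y.2, smul_mul_assoc, mul_smul_comm,
          smul_smul, ← zpow_add₀ hne]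
      · intro b c hb hc
        rw [mul_add, map_add, hb, hc, map_add, mul_add]
    · intro u v hu hv b
      rw [add_mul, map_add, hu b, hv b, map_add, add_mul]
  have hσσ : ∀ a : A, σ (σ a) = a := by
    refine DirectSum.Decomposition.inductionOn 𝒜 ?_ ?_ ?_
    · simp
    · intro m x
      rw [hσ _ _ x.2, map_smul, hσ _ _ x.2, smul_smul, ← zpow_add₀ hne]
      have : Even (m + m) := ⟨m, rfl⟩
      rw [this.neg_one_zpow, one_smul]
    · intro u v hu hv
      rw [map_add, map_add, hu, hv]
  -- Leibniz rule in terms of σ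
  have leib' : ∀ x b : A, d (x * b) = d x * b + σ x * d b := by
    intro x
    refine DirectSum.Decomposition.inductionOn 𝒜
      (motive := fun x => ∀ b : A, d (x * b) = d x * b + σ x * d b) ?_ ?_ ?_ x
    · intro b; simp
    · intro m y b
      rw [hleib m y y.2 b, hσ _ _ y.2, smul_mul_assoc]
    · intro u v hu hv b
      rw [add_mul, map_add, hu b, hv b, map_add, map_add, add_mul, add_mul]
      abel
  -- σ preserves the Jacobson radical
  have σJ : ∀ b ∈ J, σ b ∈ J := by
    intro b hb
    rw [hJ, TwoSidedIdeal.mem_jacobson_iff] at hb ⊢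
    intro y
    obtain ⟨z, hz⟩ := hb (σ y)
    rw [TwoSidedIdeal.mem_bot] at hz
    refine ⟨σ z, ?_⟩
    rw [TwoSidedIdeal.mem_bot]
    have h2 : σ (z * σ y * b + z - 1) = 0 := by rw [hz, map_zero]
    rw [map_sub, map_add, hσmul, hσmul, hσσ, hσ1] at h2
    exact h2
  -- key identities
  have key_left : ∀ x b : A, x * d b = -(d (σ x) * b) + d (σ x * b) := by
    intro x b
    have h := leib' (σ x) b
    rw [hσσ] at h
    rw [h]; abel
  have key_right : ∀ b x : A, d b * x = -(σ b * d x) + d (b * x) := by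
    intro b x
    rw [leib' b x]; abel
  subst hJp
  refine ⟨⟨0, J.zero_mem, 0, J.zero_mem, by simp⟩, ?_, ?_, ?_, ?_, ?_⟩
  · rintro x ⟨a1, ha1, b1, hb1, rfl⟩ y ⟨a2, ha2, b2, hb2, rfl⟩
    exact ⟨a1 + a2, J.add_mem ha1 ha2, b1 + b2, J.add_mem hb1 hb2, by rw [map_add]; abel⟩
  · rintro x ⟨a1, ha1, b1, hb1, rfl⟩
    exact ⟨-a1, J.neg_mem ha1, -b1, J.neg_mem hb1, by rw [map_neg]; abel⟩
  · rintro x y ⟨a, ha, b, hb, rfl⟩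
    refine ⟨x * a + -(d (σ x) * b), J.add_mem (J.mul_mem_left x a ha)
      (J.neg_mem (J.mul_mem_left (d (σ x)) b hb)), σ x * b, J.mul_mem_left (σ x) b hb, ?_⟩
    rw [mul_add, key_left x b]; abel
  · rintro x y ⟨a, ha, b, hb, rfl⟩
    refine ⟨a * x + -(σ b * d x), J.add_mem (J.mul_mem_right a x ha)
      (J.neg_mem (J.mul_mem_right (σ b) (d x) (σJ b hb))), b * x,
      J.mul_mem_right b x hb, ?_⟩
    rw [add_mul, key_right b x]; abel
  · rintro x ⟨a, ha, b, hb, rfl⟩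
    exact ⟨0, J.zero_mem, a, ha, by rw [map_add, hd2, add_zero, zero_add]⟩
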